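/- Let X be a uniform space with its induced topology, and let 𝒰 be a cover of X by open sets that is a uniform cover, i.e., there is an entourage E of X such that the cover {E[x] : x ∈ X} refines 𝒰 (where E[x] = {y ∈ X : (x,y) ∈ E}). Then there exists a continuous partition of unity subordinated to 𝒰: a family (φ_U)_{U∈𝒰} of continuous functions φ_U : X → [0,1] such that the support of φ_U is contained in U for each U ∈ 𝒰, and for each x ∈ X the (unconditionally convergent) sum ∑_{U∈𝒰} φ_U(x) equals 1. -/

import Mathlib

open Set Filter Function Uniformity Topology
open scoped SetRel

/-- Every pseudometric space is a normal topological space. -/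
theorem pseudoMetric_normalSpace {Y : Type*} [PseudoMetricSpace Y] : NormalSpace Y := by
  constructor
  intro s t hs ht hst
  rcases s.eq_empty_or_nonempty with rfl | hsne
  · exact ⟨∅, univ, isOpen_empty, isOpen_univ, Subset.rfl, subset_univ t, disjoint_bot_left⟩
  rcases t.eq_empty_or_nonempty with rfl | htne
  · exact ⟨univ, ∅, isOpen_univ, isOpen_empty, subset_univ s, Subset.rfl, disjoint_bot_right⟩
  refine ⟨{x | Metric.infDist x s < Metric.infDist x t},
    {x | Metric.infDist x t < Metric.infDist x s}, ?_, ?_, ?_, ?_, ?_⟩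
  · exact isOpen_lt (Metric.continuous_infDist_pt s) (Metric.continuous_infDist_pt t)
  · exact isOpen_lt (Metric.continuous_infDist_pt t) (Metric.continuous_infDist_pt s)
  · intro x hx
    have h1 : Metric.infDist x s = 0 := Metric.infDist_zero_of_mem hx
    have h2 : Metric.infDist x t ≠ 0 := by
      intro h0
      have : x ∈ closure t := (Metric.mem_closure_iff_infDist_zero htne).2 h0
      rw [ht.closure_eq] at this
      exact hst.le_bot ⟨hx, this⟩ |>.elim
    have := lt_of_le_of_ne (Metric.infDist_nonneg) (Ne.symm h2)
    simpa [h1] using this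
  · intro x hx
    have h1 : Metric.infDist x t = 0 := Metric.infDist_zero_of_mem hx
    have h2 : Metric.infDist x s ≠ 0 := by
      intro h0
      have : x ∈ closure s := (Metric.mem_closure_iff_infDist_zero hsne).2 h0
      rw [hs.closure_eq] at this
      exact hst.le_bot ⟨this, hx⟩ |>.elim
    have := lt_of_le_of_ne (Metric.infDist_nonneg) (Ne.symm h2)
    simpa [h1] using this
  · rw [Set.disjoint_left]
    intro x hx1 hx2
    have h1 : Metric.infDist x s < Metric.infDist x t := hx1
    have h2 : Metric.infDist x t < Metric.infDist x s := hx2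
    exact lt_asymm h1 h2

/-- Partition of unity for a pseudometric space with a uniform cover. -/
theorem pou_aux {Y : Type*} [PseudoMetricSpace Y] (𝒰 : Set (Set Y)) (ε : ℝ) (hε : 0 < ε)
    (h : ∀ x : Y, ∃ U ∈ 𝒰, Metric.ball x ε ⊆ U) :
    ∃ φ : 𝒰 → Y → ℝ,
      (∀ U, Continuous (φ U)) ∧
      (∀ U x, 0 ≤ φ U x) ∧ (∀ U x, φ U x ≤ 1) ∧
      (∀ U : 𝒰, Function.support (φ U) ⊆ (U : Set Y)) ∧
      (∀ x, HasSum (fun U : 𝒰 => φ U x) 1) := by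
  haveI : NormalSpace Y := pseudoMetric_normalSpace
  set W : 𝒰 → Set Y := fun U => ⋃ (x : Y) (_ : Metric.ball x ε ⊆ (U : Set Y)), Metric.ball x (ε / 2)
    with hW
  have hWopen : ∀ U, IsOpen (W U) := fun U =>
    isOpen_iUnion fun x => isOpen_iUnion fun _ => Metric.isOpen_ball
  have hWsub : ∀ U : 𝒰, W U ⊆ (U : Set Y) := by
    intro U y hy
    rcases mem_iUnion₂.1 hy with ⟨x, hx, hyx⟩
    exact hx (Metric.ball_subset_ball (by linarith) hyx)
  have hWcover : (univ : Set Y) ⊆ ⋃ U : 𝒰, W U := by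
    intro y _
    obtain ⟨U, hU, hball⟩ := h y
    exact mem_iUnion.2 ⟨⟨U, hU⟩, mem_iUnion₂.2 ⟨y, hball, Metric.mem_ball_self (by linarith)⟩⟩
  obtain ⟨f, hf⟩ := PartitionOfUnity.exists_isSubordinate isClosed_univ W hWopen hWcover
  refine ⟨fun U x => f U x, fun U => (f U).continuous, fun U x => f.nonneg U x,
    fun U x => f.le_one U x, ?_, ?_⟩
  · intro U
    exact (subset_tsupport _).trans ((hf U).trans (hWsub U))
  · intro x
    have h1 : ∑ i ∈ f.finsupport x, f i x = 1 := f.sum_finsupport (mem_univ x)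
    have h2 : HasSum (fun U : 𝒰 => f U x) (∑ i ∈ f.finsupport x, f i x) := by
      refine hasSum_sum_of_ne_finset_zero ?_
      intro i hi
      by_contra h0
      exact hi ((f.mem_finsupport x).2 h0)
    rwa [h1] at h2

/-- Every uniform open cover of a uniform space admits a
subordinated continuous partition of unity. -/
theorem stmt_0 {X : Type*} [UniformSpace X] (𝒰 : Set (Set X))
    (hopen : ∀ U ∈ 𝒰, IsOpen U) (hcover : ⋃₀ 𝒰 = Set.univ)
    (huniform : ∃ E ∈ uniformity X, ∀ x : X, ∃ U ∈ 𝒰, {y | (x, y) ∈ E} ⊆ U) :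
    ∃ φ : 𝒰 → X → ℝ,
      (∀ U, Continuous (φ U)) ∧
      (∀ U x, 0 ≤ φ U x) ∧ (∀ U x, φ U x ≤ 1) ∧
      (∀ U : 𝒰, Function.support (φ U) ⊆ (U : Set X)) ∧
      (∀ x, HasSum (fun U : 𝒰 => φ U x) 1) := by
  obtain ⟨E, hE, href⟩ := huniform
  let instX : UniformSpace X := ‹_›
  -- build a decreasing sequence of symmetric entourages
  have step : ∀ s : Set (X × X), s ∈ uniformity X →
      ∃ t, t ∈ uniformity X ∧ SetRel.IsSymm t ∧ t ○ t ⊆ s := by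
    intro s hs
    rcases comp_symm_mem_uniformity_sets hs with ⟨t, h1, h2, h3⟩
    exact ⟨t, h1, h2, h3⟩
  let F : {s : Set (X × X) // s ∈ uniformity X} → {s : Set (X × X) // s ∈ uniformity X} :=
    fun s => ⟨(step s.1 s.2).choose, (step s.1 s.2).choose_spec.1⟩
  let V : ℕ → {s : Set (X × X) // s ∈ uniformity X} :=
    fun n => F^[n] ⟨(step E hE).choose, (step E hE).choose_spec.1⟩
  have hVsucc : ∀ n, V (n + 1) = F (V n) := fun n => Function.iterate_succ_apply' F n _
  have hVsymm : ∀ n, SetRel.IsSymm (V n).1 := by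
    intro n
    cases n with
    | zero => exact (step E hE).choose_spec.2.1
    | succ n => rw [hVsucc]; exact (step (V n).1 (V n).2).choose_spec.2.1
  have hVcomp : ∀ n, (V (n + 1)).1 ○ (V (n + 1)).1 ⊆ (V n).1 := by
    intro n
    rw [hVsucc]
    exact (step (V n).1 (V n).2).choose_spec.2.2
  have hV0E : (V 0).1 ⊆ E := by
    have h3 := (step E hE).choose_spec.2.2
    intro p hp
    exact h3 ⟨p.1, refl_mem_uniformity (step E hE).choose_spec.1, hp⟩
  -- the coarser, countably generated uniformity
  let Φ : Filter (X × X) := ⨅ n, 𝓟 (V n).1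
  have hmemΦ : ∀ n, (V n).1 ∈ Φ := fun n => le_principal_iff.1 (iInf_le _ n)
  have hle : uniformity X ≤ Φ := le_iInf fun n => le_principal_iff.2 (V n).2
  let core : UniformSpace.Core X :=
    { uniformity := Φ
      refl := le_iInf fun n => by
        simp only [le_principal_iff, mem_principal, SetRel.id_subset_iff]
        exact ⟨fun a => refl_mem_uniformity (V n).2⟩
      symm := by
        rw [Filter.tendsto_iInf]
        intro n
        rw [Filter.tendsto_principal]
        filter_upwards [hmemΦ n] with p hp
        haveI := hVsymm n; exact SetRel.symm _ hp
      comp := le_iInf fun n => le_principal_iff.2 <|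
        Filter.mem_of_superset (Filter.mem_lift' (hmemΦ (n + 1))) (hVcomp n) }
  let u' : UniformSpace X := UniformSpace.ofCore core
  have hΦu' : @uniformity X u' = Φ := rfl
  haveI cg : Filter.IsCountablyGenerated Φ := Filter.isCountablyGenerated_seq _
  haveI cg' : @Filter.IsCountablyGenerated (X × X) (@uniformity X u') := cg
  obtain ⟨I, hI⟩ := @UniformSpace.metrizable_uniformity X u' cg'
  -- find ε
  have hV0 : (V 0).1 ∈ @uniformity X I.toUniformSpace := by rw [hI]; exact hmemΦ 0
  obtain ⟨ε, hε, hball⟩ := (@Metric.mem_uniformity_dist X I _).1 hV0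
  have hcov' : ∀ x : X, ∃ U ∈ 𝒰, @Metric.ball X I x ε ⊆ U := by
    intro x
    obtain ⟨U, hU, hsub⟩ := href x
    refine ⟨U, hU, fun y hy => hsub (hV0E (hball ((@Metric.mem_ball' X I _ _ _).1 hy)))⟩
  obtain ⟨φ, hc, h0, h1, hsupp, hsum⟩ := @pou_aux X I 𝒰 ε hε hcov'
  -- transfer continuity to the original topology
  have hle' : instX ≤ u' := hle
  have hto : @UniformSpace.toTopologicalSpace X instX ≤ @UniformSpace.toTopologicalSpace X u' :=
    UniformSpace.toTopologicalSpace_mono hle'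
  have hid : @Continuous X X (@UniformSpace.toTopologicalSpace X instX)
      (@UniformSpace.toTopologicalSpace X u') id :=
    @continuous_id_of_le X _ _ hto
  refine ⟨φ, ?_, h0, h1, hsupp, hsum⟩
  intro U
  have : @Continuous X ℝ (@UniformSpace.toTopologicalSpace X u') _ (φ U) := by
    rw [← hI]; exact hc U
  have h2 := @Continuous.comp X X ℝ (@UniformSpace.toTopologicalSpace X instX)
    (@UniformSpace.toTopologicalSpace X u') _ _ _ this hid
  exact h2
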